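/- Let n and d be positive integers with 2 ≤ d ≤ n, and let b ≥ 2. If r and m are integers satisfying b ≤ d - 2r ≤ n - m and 0 ≤ r ≤ m, then A_b(n,d,q) ≤ (q^m / B_b(m,r)) · A_b(n-m, d-2r-b+1, q). -/

import Mathlib

open Finset

/-- Cyclic coordinate access: `cget z k` is the coordinate `z_k`, indices taken mod `n`. -/
def cget {Fq : Type*} [Zero Fq] {n : ℕ} (y : Fin n → Fq) (k : ℕ) : Fq :=
  if h : n = 0 then 0 else y ⟨k % n, Nat.mod_lt k (Nat.pos_of_ne_zero h)⟩

/-- The `b`-symbol weight of a vector `y ∈ Fq^n`. -/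
def wtb {Fq : Type*} [Zero Fq] [DecidableEq Fq] {n : ℕ} (b : ℕ) (y : Fin n → Fq) : ℕ :=
  ((Finset.range n).filter fun i => ∃ j : Fin b, cget y (i + j) ≠ 0).card

/-- The `b`-symbol distance on `Fq^n`. -/
def db {Fq : Type*} [Field Fq] [DecidableEq Fq] {n : ℕ} (b : ℕ) (x y : Fin n → Fq) : ℕ :=
  wtb b (x - y)

/-- Cardinality of a `b`-ball of radius `r` in `Fq^n` (centered at `0`;
it is independent of the center). -/
def ballCard (Fq : Type*) [Field Fq] [Fintype Fq] [DecidableEq Fq] (n b r : ℕ) : ℕ :=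
  (Finset.univ.filter fun y : Fin n → Fq => db b y 0 ≤ r).card

/-- Cardinality of a `b`-sphere of radius `r` in `Fq^n`. -/
def sphereCard (Fq : Type*) [Field Fq] [Fintype Fq] [DecidableEq Fq] (n b r : ℕ) : ℕ :=
  (Finset.univ.filter fun y : Fin n → Fq => db b y 0 = r).card

/-- `Asize Fq n b d` : the largest size of a code in `Fq^n` with minimum `b`-symbol
distance at least `d`. -/
noncomputable def Asize (Fq : Type*) [Field Fq] [Fintype Fq] [DecidableEq Fq] (n b d : ℕ) : ℕ :=
  sSup {M | ∃ C : Finset (Fin n → Fq),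
    (∀ x ∈ C, ∀ y ∈ C, x ≠ y → d ≤ db b x y) ∧ C.card = M}


set_option linter.unusedSectionVars false
set_option maxHeartbeats 1000000

section Aux
variable {Fq : Type*} [Field Fq] [DecidableEq Fq]

lemma cget_lt {n : ℕ} (y : Fin n → Fq) {k : ℕ} (hk : k < n) :
    cget y k = y ⟨k, hk⟩ := by
  unfold cget
  rw [dif_neg (by omega : n ≠ 0)]
  congr 1
  exact Fin.ext (Nat.mod_eq_of_lt hk)

def proj1 {n m : ℕ} (hm : m ≤ n) (x : Fin n → Fq) : Fin (n - m) → Fq :=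
  fun i => x ⟨i, by omega⟩

def proj2 {n m : ℕ} (hm : m ≤ n) (x : Fin n → Fq) : Fin m → Fq :=
  fun i => x ⟨n - m + i, by omega⟩

lemma cget_mod {n : ℕ} (y : Fin n → Fq) (k : ℕ) : cget y k = cget y (k % n) := by
  unfold cget
  split
  · rfl
  · congr 1
    exact Fin.ext (Nat.mod_mod_of_dvd k dvd_rfl).symm

lemma cget_proj1 {n m : ℕ} (hm : m ≤ n) (h0 : 0 < n - m) (z : Fin n → Fq) (k : ℕ) :
    cget (proj1 hm z) k = cget z (k % (n - m)) := by
  rw [cget_mod (proj1 hm z) k, cget_lt (proj1 hm z) (Nat.mod_lt k h0),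
    cget_lt z (by have := Nat.mod_lt k h0; omega : k % (n-m) < n)]
  rfl

lemma cget_proj2 {n m : ℕ} (hm : m ≤ n) (h0 : 0 < m) (z : Fin n → Fq) (k : ℕ) :
    cget (proj2 hm z) k = cget z (n - m + k % m) := by
  rw [cget_mod (proj2 hm z) k, cget_lt (proj2 hm z) (Nat.mod_lt k h0),
    cget_lt z (by have := Nat.mod_lt k h0; omega : n - m + k % m < n)]
  rfl

lemma wtb_split {n m b : ℕ} (hm : m ≤ n) (hb : 1 ≤ b) (hbnm : b ≤ n - m) (z : Fin n → Fq) :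
    wtb b z ≤ wtb b (proj1 hm z) + wtb b (proj2 hm z) + (b - 1) := by
  classical
  have hn0 : 0 < n := by omega
  have h10 : 0 < n - m := by omega
  unfold wtb
  set S : Finset ℕ := (range n).filter fun i => ∃ j : Fin b, cget z (i + j) ≠ 0 with hS
  set S1 : Finset ℕ := (range (n-m)).filter fun i => ∃ j : Fin b, cget (proj1 hm z) (i + j) ≠ 0 with hS1
  set S2 : Finset ℕ := (range m).filter fun i => ∃ j : Fin b, cget (proj2 hm z) (i + j) ≠ 0 with hS2
  set E : Finset ℕ := Finset.Ico (n - m - b + 1) (n - m) with hE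
  have hEcard : E.card = b - 1 := by rw [hE, Nat.card_Ico]; omega
  set φ : ℕ → ℕ := fun i =>
    if i < n - m then i
    else if (∃ j : Fin b, i + (j : ℕ) < n ∧ cget z (i + j) ≠ 0) then i else i - m with hφ
  have hwrap : ∀ i ∈ S \ E, ¬ i < n - m →
      (¬ ∃ j : Fin b, i + (j : ℕ) < n ∧ cget z (i + j) ≠ 0) → n - b + 1 ≤ i ∧ i < n := by
    intro i hi h1 h2
    simp only [mem_sdiff, hS, mem_filter, mem_range] at hi
    obtain ⟨⟨hin, j, hj⟩, _⟩ := hi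
    push_neg at h2
    have hj2 : n ≤ i + (j : ℕ) := by
      by_contra hc
      push_neg at hc
      exact hj (h2 j hc)
    have := j.isLt
    omega
  have key : (S \ E).card ≤ (S1 ∪ S2.image (· + (n - m))).card := by
    apply Finset.card_le_card_of_injOn φ
    · intro i hi
      have hi' := hi
      simp only [Finset.mem_coe, mem_sdiff, hS, mem_filter, mem_range, hE, Finset.mem_Ico, not_and, not_lt] at hi'
      obtain ⟨⟨hin, j, hj⟩, hiE⟩ := hi'
      have hjlt : (j : ℕ) < b := j.isLt
      by_cases h1 : i < n - m
      · have hib : i + b ≤ n - m := by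
          by_cases hle : n - m - b + 1 ≤ i
          · omega
          · omega
        have hφi : φ i = i := by simp [hφ, h1]
        rw [hφi]
        apply Finset.mem_union_left
        rw [hS1, mem_filter, mem_range]
        refine ⟨h1, j, ?_⟩
        rw [cget_proj1 hm h10]
        have hlt : i + (j : ℕ) < n - m := by omega
        rw [Nat.mod_eq_of_lt hlt, cget_lt z (by omega)]
        rwa [cget_lt z (by omega : i + (j:ℕ) < n)] at hj
      · have hm0 : 0 < m := by omega
        by_cases h2 : ∃ j' : Fin b, i + (j' : ℕ) < n ∧ cget z (i + j') ≠ 0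
        · obtain ⟨j', hj'n, hj'⟩ := h2
          have hφi : φ i = i := by
            simp only [hφ]
            rw [if_neg (by omega), if_pos ⟨j', hj'n, hj'⟩]
          rw [hφi]
          apply Finset.mem_union_right
          rw [Finset.mem_image]
          refine ⟨i - (n - m), ?_, by omega⟩
          rw [hS2, mem_filter, mem_range]
          refine ⟨by omega, j', ?_⟩
          rw [cget_proj2 hm hm0]
          have e1 : (i - (n - m) + (j' : ℕ)) % m = i + (j' : ℕ) - (n - m) := by
            rw [Nat.mod_eq_of_lt (by omega)]; omega
          rw [e1]
          have e2 : n - m + (i + (j' : ℕ) - (n - m)) = i + (j' : ℕ) := by omega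
          rwa [e2]
        · have hw := hwrap i hi (by omega) h2
          push_neg at h2
          have hj2 : n ≤ i + (j : ℕ) := by
            by_contra hc
            push_neg at hc
            exact hj (h2 j hc)
          have hφi : φ i = i - m := by
            simp only [hφ]
            rw [if_neg (by omega), if_neg]
            push_neg
            exact h2
          rw [hφi]
          apply Finset.mem_union_left
          rw [hS1, mem_filter, mem_range]
          refine ⟨by omega, j, ?_⟩
          rw [cget_proj1 hm h10]
          have hmod : (i - m + (j : ℕ)) % (n - m) = i + (j : ℕ) - n := by
            rw [Nat.mod_eq_sub_mod (by omega : n - m ≤ i - m + (j:ℕ)),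
              Nat.mod_eq_of_lt (by omega)]
            omega
          rw [hmod, cget_lt z (by omega : i + (j:ℕ) - n < n)]
          unfold cget at hj
          rw [dif_neg (by omega : n ≠ 0)] at hj
          have hmn : (i + (j : ℕ)) % n = i + (j : ℕ) - n := by
            rw [Nat.mod_eq_sub_mod (by omega : n ≤ i + (j:ℕ)),
              Nat.mod_eq_of_lt (by omega)]
          convert hj using 2
          exact Fin.ext (by simp [hmn])
    · -- injectivity
      intro i hi i' hi' heq
      rw [Finset.mem_coe] at hi hi'
      have hiS := hi
      have hi'S := hi'
      simp only [mem_sdiff, hS, mem_filter, mem_range, hE, Finset.mem_Ico, not_and, not_lt] at hiS hi'S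
      obtain ⟨⟨hin, _⟩, hiE⟩ := hiS
      obtain ⟨⟨hi'n, _⟩, hi'E⟩ := hi'S
      by_cases h1 : i < n - m <;> by_cases h1' : i' < n - m
      · simpa [hφ, h1, h1'] using heq
      · -- i < n-m, i' ≥ n-m
        exfalso
        have hie : i + b ≤ n - m := by
          by_cases hle : n - m - b + 1 ≤ i
          · omega
          · omega
        simp only [hφ, if_pos h1, if_neg h1'] at heq
        by_cases h2 : ∃ j' : Fin b, i' + (j' : ℕ) < n ∧ cget z (i' + j') ≠ 0
        · rw [if_pos h2] at heq; omega
        · rw [if_neg h2] at heq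
          have hw := hwrap i' hi' (by omega) h2
          omega
      · exfalso
        have hie : i' + b ≤ n - m := by
          by_cases hle : n - m - b + 1 ≤ i'
          · omega
          · omega
        simp only [hφ, if_pos h1', if_neg h1] at heq
        by_cases h2 : ∃ j' : Fin b, i + (j' : ℕ) < n ∧ cget z (i + j') ≠ 0
        · rw [if_pos h2] at heq; omega
        · rw [if_neg h2] at heq
          have hw := hwrap i hi (by omega) h2
          omega
      · simp only [hφ, if_neg h1, if_neg h1'] at heq
        by_cases h2 : ∃ j' : Fin b, i + (j' : ℕ) < n ∧ cget z (i + j') ≠ 0 <;>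
          by_cases h2' : ∃ j' : Fin b, i' + (j' : ℕ) < n ∧ cget z (i' + j') ≠ 0
        · rwa [if_pos h2, if_pos h2'] at heq
        · rw [if_pos h2, if_neg h2'] at heq
          have hw := hwrap i' hi' (by omega) h2'
          omega
        · rw [if_neg h2, if_pos h2'] at heq
          have hw := hwrap i hi (by omega) h2
          omega
        · rw [if_neg h2, if_neg h2'] at heq
          have hw := hwrap i hi (by omega) h2
          have hw' := hwrap i' hi' (by omega) h2'
          omega
  calc S.card ≤ ((S \ E) ∪ E).card := by
        refine card_le_card ?_
        rw [Finset.sdiff_union_self_eq_union]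
        exact Finset.subset_union_left
    _ ≤ (S \ E).card + E.card := card_union_le _ _
    _ ≤ (S1 ∪ S2.image (· + (n - m))).card + (b - 1) := by
        rw [hEcard]; exact Nat.add_le_add_right key _
    _ ≤ S1.card + S2.card + (b - 1) := by
        have := Finset.card_union_le S1 (S2.image (· + (n - m)))
        have h2 := Finset.card_image_le (s := S2) (f := (· + (n - m)))
        omega


lemma cget_zero {n : ℕ} (k : ℕ) : cget (0 : Fin n → Fq) k = 0 := by
  unfold cget; split <;> simp

lemma cget_add {n : ℕ} (u v : Fin n → Fq) (k : ℕ) :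
    cget (u + v) k = cget u k + cget v k := by
  unfold cget; split <;> simp

lemma cget_neg {n : ℕ} (u : Fin n → Fq) (k : ℕ) : cget (-u) k = - cget u k := by
  unfold cget; split <;> simp

lemma wtb_zero {n b : ℕ} : wtb b (0 : Fin n → Fq) = 0 := by
  unfold wtb; simp [cget_zero]

lemma wtb_neg {n b : ℕ} (u : Fin n → Fq) : wtb b (-u) = wtb b u := by
  unfold wtb; simp [cget_neg]

lemma wtb_add_le {n b : ℕ} (u v : Fin n → Fq) : wtb b (u + v) ≤ wtb b u + wtb b v := by
  classical
  unfold wtb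
  refine le_trans (le_trans (card_le_card ?_) (card_union_le _ _)) le_rfl
  intro i hi
  simp only [mem_filter, mem_union, mem_range] at *
  obtain ⟨hin, j, hj⟩ := hi
  rw [cget_add] at hj
  by_cases h : cget u (i + j) = 0
  · exact Or.inr ⟨hin, j, by simpa [h] using hj⟩
  · exact Or.inl ⟨hin, j, h⟩

lemma wtb_sub_le {n b : ℕ} (u v : Fin n → Fq) : wtb b (u - v) ≤ wtb b u + wtb b v := by
  rw [sub_eq_add_neg]
  exact le_trans (wtb_add_le u (-v)) (by rw [wtb_neg])

lemma proj1_sub {n m : ℕ} (hm : m ≤ n) (x y : Fin n → Fq) :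
    proj1 hm (x - y) = proj1 hm x - proj1 hm y := rfl

lemma proj2_sub {n m : ℕ} (hm : m ≤ n) (x y : Fin n → Fq) :
    proj2 hm (x - y) = proj2 hm x - proj2 hm y := rfl

variable [Fintype Fq]

lemma Asize_bddAbove (n b d : ℕ) : BddAbove {M | ∃ C : Finset (Fin n → Fq),
    (∀ x ∈ C, ∀ y ∈ C, x ≠ y → d ≤ db b x y) ∧ C.card = M} := by
  refine ⟨Fintype.card (Fin n → Fq), ?_⟩
  rintro M ⟨C, -, rfl⟩
  exact Finset.card_le_univ C

lemma exists_code (n b d : ℕ) : ∃ C : Finset (Fin n → Fq),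
    (∀ x ∈ C, ∀ y ∈ C, x ≠ y → d ≤ db b x y) ∧ C.card = Asize Fq n b d := by
  have hne : Set.Nonempty {M | ∃ C : Finset (Fin n → Fq),
      (∀ x ∈ C, ∀ y ∈ C, x ≠ y → d ≤ db b x y) ∧ C.card = M} :=
    ⟨0, ∅, by simp, by simp⟩
  have h := Nat.sSup_mem hne (Asize_bddAbove n b d)
  exact h

lemma le_Asize {n b d : ℕ} (C : Finset (Fin n → Fq))
    (hC : ∀ x ∈ C, ∀ y ∈ C, x ≠ y → d ≤ db b x y) : C.card ≤ Asize Fq n b d :=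
  le_csSup (Asize_bddAbove n b d) ⟨C, hC, rfl⟩

lemma ballCard_pos (m b r : ℕ) : 0 < ballCard Fq m b r := by
  unfold ballCard
  refine Finset.card_pos.2 ⟨0, ?_⟩
  simp only [mem_filter, mem_univ, true_and, db, sub_zero]
  simp [wtb_zero]

lemma ball_translate {n m : ℕ} (hm : m ≤ n) (x : Fin n → Fq) (b r : ℕ) :
    (univ.filter fun c : Fin m → Fq => wtb b (proj2 hm x - c) ≤ r).card
      = ballCard Fq m b r := by
  unfold ballCard
  apply Finset.card_bij (fun c _ => proj2 hm x - c)
  · intro c hc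
    simp only [mem_filter, mem_univ, true_and, db, sub_zero] at *
    exact hc
  · intro c hc c' hc' h
    exact (sub_right_injective h)
  · intro y hy
    refine ⟨proj2 hm x - y, ?_, by abel⟩
    simp only [mem_filter, mem_univ, true_and, db, sub_zero] at *
    have : proj2 hm x - (proj2 hm x - y) = y := by abel
    rwa [this]

end Aux

/-- Theorem 3.3 (recurrence relation): if `b ≤ d - 2r ≤ n - m` and `0 ≤ r ≤ m`, then
`A_b(n,d,q) ≤ (q^m / B_b(m,r)) · A_b(n-m, d-2r-b+1, q)`. -/
theorem recurrence_bound {Fq : Type*} [Field Fq] [Fintype Fq] [DecidableEq Fq]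
    {n d b r m : ℕ} (hb : 2 ≤ b) (hd2 : 2 ≤ d) (hdn : d ≤ n)
    (h1 : b ≤ d - 2 * r) (h2 : d - 2 * r ≤ n - m) (hrm : r ≤ m) :
    (Asize Fq n b d : ℝ) ≤
      (Fintype.card Fq : ℝ) ^ m / (ballCard Fq m b r : ℝ) *
        (Asize Fq (n - m) b (d - 2 * r - b + 1) : ℝ) := by
  classical
  have hm : m ≤ n := by omega
  have hbnm : b ≤ n - m := le_trans h1 h2
  obtain ⟨C, hC, hCcard⟩ := exists_code (Fq := Fq) n b d
  set A' := Asize Fq (n - m) b (d - 2 * r - b + 1) with hA'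
  -- per-center bound
  have center_bound : ∀ c : Fin m → Fq,
      (C.filter fun x => wtb b (proj2 hm x - c) ≤ r).card ≤ A' := by
    intro c
    set Cc := C.filter fun x => wtb b (proj2 hm x - c) ≤ r with hCc
    have hdist : ∀ x ∈ Cc, ∀ y ∈ Cc, x ≠ y →
        d ≤ wtb b (proj1 hm (x - y)) + 2 * r + (b - 1) := by
      intro x hx y hy hxy
      simp only [hCc, mem_filter] at hx hy
      have hd := hC x hx.1 y hy.1 hxy
      have hsplit := wtb_split hm (by omega) hbnm (x - y)
      have h2' : wtb b (proj2 hm (x - y)) ≤ 2 * r := by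
        rw [proj2_sub]
        have : proj2 hm x - proj2 hm y = (proj2 hm x - c) - (proj2 hm y - c) := by abel
        rw [this]
        have := wtb_sub_le (b := b) (proj2 hm x - c) (proj2 hm y - c)
        omega
      unfold db at hd
      omega
    have hinj : Set.InjOn (proj1 hm) (Cc : Set (Fin n → Fq)) := by
      intro x hx y hy hxy
      by_contra hne
      rw [Finset.mem_coe] at hx hy
      have := hdist x hx y hy hne
      rw [proj1_sub] at this
      have hz : proj1 hm x - proj1 hm y = 0 := by rw [hxy]; abel
      rw [hz, wtb_zero] at this
      omega
    have himg : ∀ x₁ ∈ Cc.image (proj1 hm), ∀ y₁ ∈ Cc.image (proj1 hm), x₁ ≠ y₁ →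
        d - 2 * r - b + 1 ≤ db b x₁ y₁ := by
      intro x₁ hx₁ y₁ hy₁ hne
      obtain ⟨x, hx, rfl⟩ := Finset.mem_image.1 hx₁
      obtain ⟨y, hy, rfl⟩ := Finset.mem_image.1 hy₁
      have hxy : x ≠ y := fun h => hne (by rw [h])
      have := hdist x hx y hy hxy
      rw [proj1_sub] at this
      unfold db
      omega
    calc Cc.card = (Cc.image (proj1 hm)).card := (Finset.card_image_of_injOn hinj).symm
      _ ≤ A' := le_Asize _ himg
  -- double counting
  have hcount : C.card * ballCard Fq m b r
      ≤ Fintype.card Fq ^ m * A' := by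
    have swap : ∑ x ∈ C, (univ.filter fun c : Fin m → Fq => wtb b (proj2 hm x - c) ≤ r).card
        = ∑ c : Fin m → Fq, (C.filter fun x => wtb b (proj2 hm x - c) ≤ r).card := by
      simp only [Finset.card_filter]
      exact Finset.sum_comm
    calc C.card * ballCard Fq m b r
        = ∑ x ∈ C, (univ.filter fun c : Fin m → Fq => wtb b (proj2 hm x - c) ≤ r).card := by
          rw [Finset.sum_congr rfl (fun x _ => ball_translate hm x b r)]
          simp [mul_comm]
      _ = ∑ c : Fin m → Fq, (C.filter fun x => wtb b (proj2 hm x - c) ≤ r).card := swap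
      _ ≤ ∑ _c : Fin m → Fq, A' := Finset.sum_le_sum (fun c _ => center_bound c)
      _ = Fintype.card (Fin m → Fq) * A' := by rw [Finset.sum_const, Finset.card_univ, smul_eq_mul]
      _ = Fintype.card Fq ^ m * A' := by rw [Fintype.card_fun, Fintype.card_fin]
  have hB : (0 : ℝ) < (ballCard Fq m b r : ℝ) := by
    exact_mod_cast ballCard_pos (Fq := Fq) m b r
  rw [div_mul_eq_mul_div, le_div_iff₀ hB, ← hCcard]
  calc (C.card : ℝ) * (ballCard Fq m b r : ℝ)
      = ((C.card * ballCard Fq m b r : ℕ) : ℝ) := by push_cast; ring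
    _ ≤ ((Fintype.card Fq ^ m * A' : ℕ) : ℝ) := by exact_mod_cast hcount
    _ = (Fintype.card Fq : ℝ) ^ m * (A' : ℝ) := by push_cast; ring
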